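/- There exists a constant c > 0 such that for all a ∈ ℝ^q and b ∈ ℝ, E[ |⟨a, W⟩ − b| · min(B, 1) ] ≥ c (‖a‖ + |b|). -/

import Mathlib

open MeasureTheory
open scoped RealInnerProductSpace

section Aux
set_option linter.unusedSectionVars false
variable {q : ℕ} {Ω : Type*} [MeasurableSpace Ω]
  {P : Measure Ω} [IsProbabilityMeasure P]
  {W : Ω → EuclideanSpace ℝ (Fin q)} {B : Ω → ℝ}

lemma minB_mem (hBpos : ∀ᵐ ω ∂P, 0 < B ω) :
    ∀ᵐ ω ∂P, 0 < min (B ω) 1 ∧ min (B ω) 1 ≤ 1 := by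
  filter_upwards [hBpos] with ω h
  exact ⟨lt_min h one_pos, min_le_right _ _⟩

lemma aux_meas (hWmeas : Measurable W) (hBmeas : Measurable B)
    (a : EuclideanSpace ℝ (Fin q)) (b : ℝ) :
    Measurable (fun ω => |⟪a, W ω⟫ - b| * min (B ω) 1) := by
  have h1 : Measurable fun ω => ⟪a, W ω⟫ := measurable_const.inner hWmeas
  exact ((h1.sub measurable_const).abs.mul (hBmeas.min measurable_const))

lemma abs_inner_sub_le (a : EuclideanSpace ℝ (Fin q)) (b : ℝ) (w : EuclideanSpace ℝ (Fin q)) :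
    |⟪a, w⟫ - b| ≤ ‖a‖ * ‖w‖ + |b| := by
  have h1 : |⟪a, w⟫ - b| ≤ |⟪a, w⟫| + |b| := by
    rw [sub_eq_add_neg]
    exact (abs_add_le _ _).trans_eq (by rw [abs_neg])
  have h2 := abs_real_inner_le_norm a w
  linarith

lemma aux_integrable (hWmeas : Measurable W) (hBmeas : Measurable B)
    (hWint : Integrable W P) (hBpos : ∀ᵐ ω ∂P, 0 < B ω)
    (a : EuclideanSpace ℝ (Fin q)) (b : ℝ) :
    Integrable (fun ω => |⟪a, W ω⟫ - b| * min (B ω) 1) P := by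
  have hd : Integrable (fun ω => ‖a‖ * ‖W ω‖ + |b|) P :=
    (hWint.norm.const_mul _).add (integrable_const _)
  refine hd.mono' ((aux_meas hWmeas hBmeas a b).aestronglyMeasurable) ?_
  filter_upwards [minB_mem hBpos] with ω hm
  obtain ⟨h0, h1⟩ := hm
  have habs : |min (B ω) 1| ≤ 1 := abs_le.2 ⟨by linarith, h1⟩
  calc ‖|⟪a, W ω⟫ - b| * min (B ω) 1‖
      = |⟪a, W ω⟫ - b| * |min (B ω) 1| := by rw [Real.norm_eq_abs, abs_mul, abs_abs]
    _ ≤ |⟪a, W ω⟫ - b| * 1 := mul_le_mul_of_nonneg_left habs (abs_nonneg _)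
    _ ≤ ‖a‖ * ‖W ω‖ + |b| := by rw [mul_one]; exact abs_inner_sub_le a b (W ω)

end Aux

/-- Let `(W, B)` be jointly distributed with `W : Ω → ℝ^q` integrable with mean `μ`,
`B : Ω → ℝ` with `P(B > 0) = 1`, and suppose `E|⟨u, W − μ⟩| ≥ η > 0` for every unit
vector `u`.  Then there is `c > 0` with
`E[|⟨a, W⟩ − b| · min(B, 1)] ≥ c (‖a‖ + |b|)` for all `a ∈ ℝ^q`, `b ∈ ℝ`. -/
theorem exists_pos_lower_bound_expectation_abs_inner_sub_mul_min
    (q : ℕ) (hq : 1 ≤ q) {Ω : Type*} [MeasurableSpace Ω]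
    (P : Measure Ω) [IsProbabilityMeasure P]
    (W : Ω → EuclideanSpace ℝ (Fin q)) (B : Ω → ℝ)
    (hWmeas : Measurable W) (hBmeas : Measurable B)
    (hWint : Integrable W P)
    (hBpos : ∀ᵐ ω ∂P, 0 < B ω)
    (μ : EuclideanSpace ℝ (Fin q)) (hμ : μ = ∫ ω, W ω ∂P)
    (η : ℝ) (hη : 0 < η)
    (hsep : ∀ u : EuclideanSpace ℝ (Fin q), ‖u‖ = 1 → η ≤ ∫ ω, |⟪u, W ω - μ⟫| ∂P) :
    ∃ c > 0, ∀ (a : EuclideanSpace ℝ (Fin q)) (b : ℝ),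
      c * (‖a‖ + |b|) ≤ ∫ ω, |⟪a, W ω⟫ - b| * min (B ω) 1 ∂P := by

  classical
  set g : EuclideanSpace ℝ (Fin q) × ℝ → ℝ :=
    fun p => ∫ ω, |⟪p.1, W ω⟫ - p.2| * min (B ω) 1 ∂P with hg
  have hint : ∀ (a : EuclideanSpace ℝ (Fin q)) (b : ℝ),
      Integrable (fun ω => |⟪a, W ω⟫ - b| * min (B ω) 1) P :=
    fun a b => aux_integrable hWmeas hBmeas hWint hBpos a b
  set M := ∫ ω, ‖W ω‖ ∂P with hM
  have hM0 : 0 ≤ M := integral_nonneg fun ω => norm_nonneg _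
  -- Lipschitz-type bound
  have hlip : ∀ p p' : EuclideanSpace ℝ (Fin q) × ℝ,
      |g p - g p'| ≤ (M + 1) * dist p p' := by
    intro p p'
    have hsub := (hint p.1 p.2).sub (hint p'.1 p'.2)
    rw [hg]
    rw [← integral_sub (hint p.1 p.2) (hint p'.1 p'.2)]
    have hbd : Integrable (fun ω => ‖p.1 - p'.1‖ * ‖W ω‖ + |p.2 - p'.2|) P :=
      (hWint.norm.const_mul _).add (integrable_const _)
    calc |∫ ω, (|⟪p.1, W ω⟫ - p.2| * min (B ω) 1 - |⟪p'.1, W ω⟫ - p'.2| * min (B ω) 1) ∂P|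
        ≤ ∫ ω, |(|⟪p.1, W ω⟫ - p.2| * min (B ω) 1 - |⟪p'.1, W ω⟫ - p'.2| * min (B ω) 1)| ∂P :=
          by
            rw [← Real.norm_eq_abs]
            exact (norm_integral_le_integral_norm _).trans_eq
              (by simp only [Real.norm_eq_abs])
      _ ≤ ∫ ω, (‖p.1 - p'.1‖ * ‖W ω‖ + |p.2 - p'.2|) ∂P := by
          refine integral_mono_ae hsub.abs hbd ?_
          filter_upwards [minB_mem hBpos] with ω hm
          obtain ⟨h0, h1⟩ := hm
          have key : |(|⟪p.1, W ω⟫ - p.2| - |⟪p'.1, W ω⟫ - p'.2|)| ≤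
              ‖p.1 - p'.1‖ * ‖W ω‖ + |p.2 - p'.2| := by
            have h2 : |(|⟪p.1, W ω⟫ - p.2| - |⟪p'.1, W ω⟫ - p'.2|)| ≤
                |(⟪p.1, W ω⟫ - p.2) - (⟪p'.1, W ω⟫ - p'.2)| := abs_abs_sub_abs_le_abs_sub _ _
            have h3 : (⟪p.1, W ω⟫ - p.2) - (⟪p'.1, W ω⟫ - p'.2)
                = ⟪p.1 - p'.1, W ω⟫ - (p.2 - p'.2) := by
              rw [inner_sub_left]; ring
            rw [h3] at h2
            exact h2.trans (abs_inner_sub_le _ _ _)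
          calc |(|⟪p.1, W ω⟫ - p.2| * min (B ω) 1 - |⟪p'.1, W ω⟫ - p'.2| * min (B ω) 1)|
              = |(|⟪p.1, W ω⟫ - p.2| - |⟪p'.1, W ω⟫ - p'.2|)| * |min (B ω) 1| := by
                rw [← sub_mul, abs_mul]
            _ ≤ |(|⟪p.1, W ω⟫ - p.2| - |⟪p'.1, W ω⟫ - p'.2|)| * 1 :=
                mul_le_mul_of_nonneg_left (abs_le.2 ⟨by linarith, h1⟩) (abs_nonneg _)
            _ ≤ ‖p.1 - p'.1‖ * ‖W ω‖ + |p.2 - p'.2| := by rw [mul_one]; exact key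
      _ = ‖p.1 - p'.1‖ * M + |p.2 - p'.2| := by
          rw [integral_add (hWint.norm.const_mul _) (integrable_const _),
            integral_const_mul, integral_const, probReal_univ, smul_eq_mul,
            one_mul]
      _ ≤ (M + 1) * dist p p' := by
          have d1 : ‖p.1 - p'.1‖ ≤ dist p p' := by
            rw [← dist_eq_norm]; exact le_trans (le_max_left _ _) (le_of_eq (Prod.dist_eq).symm)
          have d2 : |p.2 - p'.2| ≤ dist p p' := by
            rw [← Real.dist_eq]; exact le_trans (le_max_right _ _) (le_of_eq (Prod.dist_eq).symm)
          have hd0 : 0 ≤ dist p p' := dist_nonneg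
          nlinarith [mul_le_mul_of_nonneg_left d1 hM0]
  have hcont : Continuous g := by
    rw [Metric.continuous_iff]
    intro p ε hε
    refine ⟨ε / (M + 2), by positivity, fun p' hp' => ?_⟩
    rw [Real.dist_eq]
    calc |g p' - g p| ≤ (M + 1) * dist p' p := hlip p' p
      _ ≤ (M + 1) * (ε / (M + 2)) := mul_le_mul_of_nonneg_left hp'.le (by linarith)
      _ < (M + 2) * (ε / (M + 2)) := by
          apply mul_lt_mul_of_pos_right (by linarith) (by positivity)
      _ = ε := by field_simp
  -- the compact sphere
  set S : Set (EuclideanSpace ℝ (Fin q) × ℝ) := {p | ‖p.1‖ + |p.2| = 1} with hS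
  have hSne : S.Nonempty := ⟨(0, 1), by simp [hS]⟩
  have hSc : IsCompact S := by
    have hclosed : IsClosed S :=
      isClosed_eq (Continuous.add (continuous_norm.comp continuous_fst)
        (continuous_abs.comp continuous_snd)) continuous_const
    have hbdd : Bornology.IsBounded S := by
      refine (Metric.isBounded_closedBall (x := (0 : EuclideanSpace ℝ (Fin q) × ℝ)) (r := 1)).subset ?_
      intro p hp
      simp only [Metric.mem_closedBall, dist_zero_right, Prod.norm_def]
      have h1 : ‖p.1‖ + |p.2| = 1 := hp
      have := norm_nonneg p.1
      have := abs_nonneg p.2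
      rw [Real.norm_eq_abs]
      exact max_le (by linarith) (by linarith)
    exact Metric.isCompact_of_isClosed_isBounded hclosed hbdd
  -- positivity on S
  have hpos : ∀ p ∈ S, 0 < g p := by
    intro p hp
    have hnn : 0 ≤ᵐ[P] fun ω => |⟪p.1, W ω⟫ - p.2| * min (B ω) 1 := by
      filter_upwards [minB_mem hBpos] with ω hm
      exact mul_nonneg (abs_nonneg _) hm.1.le
    have hge : 0 ≤ g p := integral_nonneg_of_ae hnn
    rcases hge.lt_or_eq with h | h
    · exact h
    exfalso
    have hz : (fun ω => |⟪p.1, W ω⟫ - p.2| * min (B ω) 1) =ᵐ[P] 0 :=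
      (integral_eq_zero_iff_of_nonneg_ae hnn (hint p.1 p.2)).1 h.symm
    have heq : ∀ᵐ ω ∂P, ⟪p.1, W ω⟫ = p.2 := by
      filter_upwards [hz, minB_mem hBpos] with ω h0 hm
      have : |⟪p.1, W ω⟫ - p.2| = 0 := by
        by_contra hne
        have h1 : 0 < |⟪p.1, W ω⟫ - p.2| := lt_of_le_of_ne (abs_nonneg _) (Ne.symm hne)
        have := mul_pos h1 hm.1
        simp only [Pi.zero_apply] at h0
        linarith
      have := abs_eq_zero.1 this
      linarith [sub_eq_zero.1 this]
    by_cases hp1 : p.1 = 0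
    · -- then |p.2| = 1 but ⟪0, W⟫ = 0 = p.2 a.e.
      have hp2 : |p.2| = 1 := by
        have h1 : ‖p.1‖ + |p.2| = 1 := hp
        rw [hp1, norm_zero, zero_add] at h1; exact h1
      have : ∀ᵐ ω ∂P, (0 : ℝ) = p.2 := by
        filter_upwards [heq] with ω h1
        rw [hp1] at h1; simpa using h1
      obtain ⟨ω, hω⟩ := this.exists
      rw [← hω] at hp2
      simp at hp2
    · -- unit vector argument
      set u := ‖p.1‖⁻¹ • p.1 with hu
      have hun : ‖u‖ = 1 := norm_smul_inv_norm hp1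
      have hinner_int : Integrable (fun ω => ⟪p.1, W ω⟫) P := hWint.const_inner p.1
      have hμb : ⟪p.1, μ⟫ = p.2 := by
        rw [hμ, ← integral_inner (𝕜 := ℝ) hWint, integral_congr_ae (g := fun _ => p.2) heq]
        simp
      have hzero : ∀ᵐ ω ∂P, ⟪u, W ω - μ⟫ = 0 := by
        filter_upwards [heq] with ω h1
        rw [hu, real_inner_smul_left, inner_sub_right, h1, hμb, sub_self, mul_zero]
      have hzi : ∫ ω, |⟪u, W ω - μ⟫| ∂P = 0 := by
        have : (fun ω => |⟪u, W ω - μ⟫|) =ᵐ[P] fun _ => (0 : ℝ) := by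
          filter_upwards [hzero] with ω h1
          rw [h1, abs_zero]
        rw [integral_congr_ae this, integral_zero]
      linarith [hsep u hun]
  -- extract the minimum
  obtain ⟨p₀, hp₀S, hp₀min⟩ := hSc.exists_isMinOn hSne hcont.continuousOn
  refine ⟨g p₀, hpos p₀ hp₀S, fun a b => ?_⟩
  by_cases hr : ‖a‖ + |b| = 0
  · rw [hr, mul_zero]
    apply integral_nonneg_of_ae
    filter_upwards [minB_mem hBpos] with ω hm
    exact mul_nonneg (abs_nonneg _) hm.1.le
  · have hrpos : 0 < ‖a‖ + |b| :=
      lt_of_le_of_ne (by positivity) (Ne.symm hr)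
    set r := ‖a‖ + |b| with hrdef
    set p : EuclideanSpace ℝ (Fin q) × ℝ := (r⁻¹ • a, r⁻¹ * b) with hpdef
    have hpS : p ∈ S := by
      simp only [hS, Set.mem_setOf_eq, hpdef, norm_smul, norm_inv, Real.norm_eq_abs,
        abs_mul, abs_inv, abs_of_pos hrpos]
      field_simp
      exact hrdef.symm
    have hhom : ∫ ω, |⟪a, W ω⟫ - b| * min (B ω) 1 ∂P = r * g p := by
      rw [hg]
      rw [← integral_const_mul]
      apply integral_congr_ae
      apply Filter.Eventually.of_forall
      intro ω
      show |⟪a, W ω⟫ - b| * min (B ω) 1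
        = r * (|⟪r⁻¹ • a, W ω⟫ - r⁻¹ * b| * min (B ω) 1)
      rw [real_inner_smul_left]
      have h3 : r⁻¹ * ⟪a, W ω⟫ - r⁻¹ * b = r⁻¹ * (⟪a, W ω⟫ - b) := by ring
      rw [h3, abs_mul, abs_inv, abs_of_pos hrpos]
      field_simp
    rw [hhom]
    calc g p₀ * r ≤ g p * r := mul_le_mul_of_nonneg_right (hp₀min hpS) hrpos.le
      _ = r * g p := mul_comm _ _
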